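/- Let $H$ be a Hopf algebra over a field $k$ whose antipode $S$ is injective (e.g., the dual Hopf algebra $H^\circ$ of any Hopf algebra). Then every locally finite left $H$-module $M$ (i.e., $\dim_k Hm < \infty$ for all $m \in M$) has the property that every $S(H)$-submodule of $M$ is an $H$-submodule. -/

import Mathlib

open TensorProduct LinearMap Coalgebra

section Ctr
variable {k : Type*} [CommRing k]
variable {Q P : Type*} [AddCommGroup Q] [Module k Q] [AddCommGroup P] [Module k P]

/-- contract the second tensor factor with a functional -/
noncomputable def ctr2 (g : P →ₗ[k] k) : Q ⊗[k] P →ₗ[k] Q :=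
  (TensorProduct.rid k Q).toLinearMap ∘ₗ lTensor Q g

/-- contract the first tensor factor with a functional -/
noncomputable def ctr1 (f : Q →ₗ[k] k) : Q ⊗[k] P →ₗ[k] P :=
  (TensorProduct.lid k P).toLinearMap ∘ₗ rTensor P f

@[simp] lemma ctr2_tmul (g : P →ₗ[k] k) (x : Q) (y : P) : ctr2 g (x ⊗ₜ y) = g y • x := by
  simp [ctr2]

@[simp] lemma ctr1_tmul (f : Q →ₗ[k] k) (x : Q) (y : P) : ctr1 f (x ⊗ₜ y) = f x • y := by
  simp [ctr1]

end Ctr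

section Coalg
variable {k : Type*} [Field k] {H : Type*} [AddCommGroup H] [Module k H] [Coalgebra k H]

/-- convolution of two functionals -/
noncomputable def dmul (f g : H →ₗ[k] k) : H →ₗ[k] k :=
  (LinearMap.mul' k k) ∘ₗ (TensorProduct.map f g) ∘ₗ Coalgebra.comul

lemma dmul_apply_repr (f g : H →ₗ[k] k) (b : H) (r : Coalgebra.Repr k b (H × H)) :
    dmul f g b = ∑ i ∈ r.index, f (r.left i) * g (r.right i) := by
  simp only [dmul, LinearMap.comp_apply, ← r.eq, map_sum, TensorProduct.map_tmul,
    LinearMap.mul'_apply]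

lemma M1 (l g : H →ₗ[k] k) (b : H) :
    ctr2 l (Coalgebra.comul (R := k) (ctr2 g (Coalgebra.comul (R := k) b)))
      = ctr2 (dmul l g) (Coalgebra.comul (R := k) b) := by
  classical
  set r : Coalgebra.Repr k b (H × H) := ℛ k b with hr
  have core := Coalgebra.sum_tmul_tmul_eq (R := k) r
    (fun i => ℛ k (r.left i)) (fun i => ℛ k (r.right i))
  have himg := congrArg ((ctr2 ((LinearMap.mul' k k) ∘ₗ (TensorProduct.map l g)) : H ⊗[k] (H ⊗[k] H) →ₗ[k] H)) core
  simp only [map_sum, ctr2_tmul, LinearMap.comp_apply, TensorProduct.map_tmul,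
    LinearMap.mul'_apply] at himg
  -- himg : ∑ i, ∑ j, (l (a₁.right) * g (r.right i)) • a₁.left = ∑ i, ∑ j, (l (a₂.left) * g (a₂.right)) • r.left i
  calc ctr2 l (Coalgebra.comul (R := k) (ctr2 g (Coalgebra.comul (R := k) b)))
      = ∑ i ∈ r.index, g (r.right i) •
          ctr2 l (Coalgebra.comul (R := k) (r.left i)) := by
        rw [← r.eq]; simp [map_sum]
    _ = ∑ i ∈ r.index, ∑ j ∈ (ℛ k (r.left i)).index,
          (l ((ℛ k (r.left i)).right j) * g (r.right i)) • (ℛ k (r.left i)).left j := by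
        refine Finset.sum_congr rfl fun i _ => ?_
        rw [← (ℛ k (r.left i)).eq]
        simp only [map_sum, ctr2_tmul, Finset.smul_sum]
        exact Finset.sum_congr rfl fun j _ => by rw [smul_smul, mul_comm]
    _ = ∑ i ∈ r.index, ∑ j ∈ (ℛ k (r.right i)).index,
          (l ((ℛ k (r.right i)).left j) * g ((ℛ k (r.right i)).right j)) • r.left i := himg
    _ = ctr2 (dmul l g) (Coalgebra.comul (R := k) b) := by
        rw [← r.eq]
        simp only [map_sum, ctr2_tmul]
        refine Finset.sum_congr rfl fun i _ => ?_
        rw [dmul_apply_repr l g (r.right i) (ℛ k (r.right i)), Finset.sum_smul]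

end Coalg
set_option linter.unusedSectionVars false

section Coalg2
variable {k : Type*} [Field k] {H : Type*} [AddCommGroup H] [Module k H] [Coalgebra k H]

lemma M2 (f l : H →ₗ[k] k) (a : H) :
    ctr1 l (Coalgebra.comul (R := k) (ctr1 f (Coalgebra.comul (R := k) a)))
      = ctr1 (dmul f l) (Coalgebra.comul (R := k) a) := by
  classical
  have core := Coalgebra.sum_tmul_tmul_eq (R := k) (ℛ k a)
    (fun i => ℛ k ((ℛ k a).left i)) (fun i => ℛ k ((ℛ k a).right i))
  have himg := congrArg (fun t => ctr1 l ((ctr1 f : H ⊗[k] (H ⊗[k] H) →ₗ[k] H ⊗[k] H) t)) core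
  simp only [map_sum, ctr1_tmul, map_smul] at himg
  calc ctr1 l (Coalgebra.comul (R := k) (ctr1 f (Coalgebra.comul (R := k) a)))
      = ∑ i ∈ (ℛ k a).index, f ((ℛ k a).left i) •
          ctr1 l (Coalgebra.comul (R := k) ((ℛ k a).right i)) := by
        rw [← (ℛ k a).eq]; simp [map_sum]
    _ = ∑ i ∈ (ℛ k a).index, ∑ j ∈ (ℛ k ((ℛ k a).right i)).index,
          f ((ℛ k a).left i) • (l ((ℛ k ((ℛ k a).right i)).left j) •
            (ℛ k ((ℛ k a).right i)).right j) := by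
        refine Finset.sum_congr rfl fun i _ => ?_
        rw [← (ℛ k ((ℛ k a).right i)).eq]
        simp [map_sum, Finset.smul_sum]
    _ = ∑ i ∈ (ℛ k a).index, ∑ j ∈ (ℛ k ((ℛ k a).left i)).index,
          f ((ℛ k ((ℛ k a).left i)).left j) • (l ((ℛ k ((ℛ k a).left i)).right j) •
            (ℛ k a).right i) := himg.symm
    _ = ctr1 (dmul f l) (Coalgebra.comul (R := k) a) := by
        rw [← (ℛ k a).eq]
        simp only [map_sum, ctr1_tmul]
        refine Finset.sum_congr rfl fun i _ => ?_
        rw [dmul_apply_repr f l ((ℛ k a).left i) (ℛ k ((ℛ k a).left i)), Finset.sum_smul]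
        exact Finset.sum_congr rfl fun j _ => by rw [smul_smul]

noncomputable def PsiM (f g : H →ₗ[k] k) : H ⊗[k] (H ⊗[k] H) →ₗ[k] H :=
  (ctr2 g) ∘ₗ (ctr1 f)

@[simp] lemma PsiM_tmul (f g : H →ₗ[k] k) (x y z : H) :
    PsiM f g (x ⊗ₜ (y ⊗ₜ z)) = f x • (g z • y) := by
  simp [PsiM]

noncomputable def D2 : H →ₗ[k] H ⊗[k] (H ⊗[k] H) :=
  (LinearMap.lTensor H (Coalgebra.comul (R := k))) ∘ₗ (Coalgebra.comul (R := k))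

lemma Psi_D2 (f g : H →ₗ[k] k) (h : H) :
    PsiM f g (D2 h) = ∑ i ∈ (ℛ k h).index,
      f ((ℛ k h).left i) • ctr2 g (Coalgebra.comul (R := k) ((ℛ k h).right i)) := by
  rw [D2, LinearMap.comp_apply, ← (ℛ k h).eq]
  simp [map_sum, PsiM]

lemma PsiAssoc (f g : H →ₗ[k] k) (u : H ⊗[k] H) (z : H) :
    PsiM f g ((TensorProduct.assoc k H H H) (u ⊗ₜ z)) = g z • ctr1 f u := by
  induction u using TensorProduct.induction_on with
  | zero => rw [TensorProduct.zero_tmul]; simp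
  | tmul x y =>
      simp only [TensorProduct.assoc_tmul, PsiM_tmul, ctr1_tmul]
      rw [smul_comm]
  | add a b ha hb => simp [TensorProduct.add_tmul, ha, hb, smul_add]

lemma Psi_D2' (f g : H →ₗ[k] k) (h : H) :
    PsiM f g (D2 h) = ∑ i ∈ (ℛ k h).index,
      g ((ℛ k h).right i) • ctr1 f (Coalgebra.comul (R := k) ((ℛ k h).left i)) := by
  have hco := Coalgebra.coassoc_apply (R := k) h
  rw [D2, LinearMap.comp_apply, ← hco, ← (ℛ k h).eq]
  simp only [map_sum, LinearMap.rTensor_tmul, PsiAssoc]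

lemma mem_range_map (Y : Submodule k H) (t : H ⊗[k] H)
    (h2 : ∀ l : H →ₗ[k] k, ctr2 l t ∈ Y) (h1 : ∀ l : H →ₗ[k] k, ctr1 l t ∈ Y) :
    t ∈ LinearMap.range (TensorProduct.map Y.subtype Y.subtype) := by
  classical
  obtain ⟨s, hs⟩ := TensorProduct.exists_finset (R := k) t
  -- step 1 : t ∈ range (rTensor H Y.subtype)
  have m2 : t ∈ LinearMap.range (LinearMap.rTensor H Y.subtype) := by
    set V₂ : Submodule k H := Submodule.span k (↑(s.image Prod.snd) : Set H) with hV₂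
    haveI : FiniteDimensional k V₂ :=
      FiniteDimensional.span_of_finite k (s.image Prod.snd).finite_toSet
    obtain ⟨q₂, hq₂⟩ := Submodule.exists_isCompl V₂
    set p₂ := V₂.projectionOnto q₂ hq₂ with hp₂
    set b₂ := Module.finBasis k V₂ with hb₂
    have key2 : t = ∑ i, (ctr2 ((b₂.coord i) ∘ₗ p₂) t) ⊗ₜ[k] (b₂ i : H) := by
      have hcoe : ∀ p ∈ s, (p : H × H).2 = ∑ i, (b₂.coord i) (p₂ p.2) • (b₂ i : H) := by
        intro p hp
        have hmem : p.2 ∈ V₂ :=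
          Submodule.subset_span (Finset.mem_coe.mpr (Finset.mem_image_of_mem Prod.snd hp))
        have h1' : p₂ p.2 = ⟨p.2, hmem⟩ :=
          Submodule.projectionOnto_apply_left hq₂ ⟨p.2, hmem⟩
        have h2' := b₂.sum_repr (p₂ p.2)
        calc p.2 = ((⟨p.2, hmem⟩ : V₂) : H) := rfl
          _ = ((∑ i, b₂.repr (p₂ p.2) i • b₂ i : V₂) : H) := by rw [h2', h1']
          _ = ∑ i, (b₂.coord i) (p₂ p.2) • (b₂ i : H) := by
              rw [Submodule.coe_sum]
              exact Finset.sum_congr rfl fun i _ => by simp [Module.Basis.coord_apply]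
      calc t = ∑ p ∈ s, p.1 ⊗ₜ[k] p.2 := hs
        _ = ∑ p ∈ s, ∑ i, (b₂.coord i) (p₂ p.2) • (p.1 ⊗ₜ[k] (b₂ i : H)) := by
            refine Finset.sum_congr rfl fun p hp => ?_
            conv_lhs => rw [hcoe p hp]
            rw [TensorProduct.tmul_sum]
            exact Finset.sum_congr rfl fun i _ => (TensorProduct.tmul_smul _ _ _)
        _ = ∑ i, ∑ p ∈ s, (b₂.coord i) (p₂ p.2) • (p.1 ⊗ₜ[k] (b₂ i : H)) := Finset.sum_comm
        _ = ∑ i, (ctr2 ((b₂.coord i) ∘ₗ p₂) t) ⊗ₜ[k] (b₂ i : H) := by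
            refine Finset.sum_congr rfl fun i _ => ?_
            rw [hs]
            simp only [map_sum, ctr2_tmul, LinearMap.comp_apply]
            rw [TensorProduct.sum_tmul]
            exact Finset.sum_congr rfl fun p _ => by rw [TensorProduct.smul_tmul']
    refine ⟨∑ i, (⟨_, h2 ((b₂.coord i) ∘ₗ p₂)⟩ : ↥Y) ⊗ₜ[k] (b₂ i : H), ?_⟩
    rw [map_sum]
    simp only [LinearMap.rTensor_tmul, Submodule.coe_subtype]
    exact key2.symm
  -- step 2 : t ∈ range (lTensor H Y.subtype)
  have m1 : t ∈ LinearMap.range (LinearMap.lTensor H Y.subtype) := by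
    set V₁ : Submodule k H := Submodule.span k (↑(s.image Prod.fst) : Set H) with hV₁
    haveI : FiniteDimensional k V₁ :=
      FiniteDimensional.span_of_finite k (s.image Prod.fst).finite_toSet
    obtain ⟨q₁, hq₁⟩ := Submodule.exists_isCompl V₁
    set p₁ := V₁.projectionOnto q₁ hq₁ with hp₁
    set b₁ := Module.finBasis k V₁ with hb₁
    have key1 : t = ∑ i, (b₁ i : H) ⊗ₜ[k] (ctr1 ((b₁.coord i) ∘ₗ p₁) t) := by
      have hcoe : ∀ p ∈ s, (p : H × H).1 = ∑ i, (b₁.coord i) (p₁ p.1) • (b₁ i : H) := by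
        intro p hp
        have hmem : p.1 ∈ V₁ :=
          Submodule.subset_span (Finset.mem_coe.mpr (Finset.mem_image_of_mem Prod.fst hp))
        have h1' : p₁ p.1 = ⟨p.1, hmem⟩ :=
          Submodule.projectionOnto_apply_left hq₁ ⟨p.1, hmem⟩
        have h2' := b₁.sum_repr (p₁ p.1)
        calc p.1 = ((⟨p.1, hmem⟩ : V₁) : H) := rfl
          _ = ((∑ i, b₁.repr (p₁ p.1) i • b₁ i : V₁) : H) := by rw [h2', h1']
          _ = ∑ i, (b₁.coord i) (p₁ p.1) • (b₁ i : H) := by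
              rw [Submodule.coe_sum]
              exact Finset.sum_congr rfl fun i _ => by simp [Module.Basis.coord_apply]
      calc t = ∑ p ∈ s, p.1 ⊗ₜ[k] p.2 := hs
        _ = ∑ p ∈ s, ∑ i, (b₁.coord i) (p₁ p.1) • ((b₁ i : H) ⊗ₜ[k] p.2) := by
            refine Finset.sum_congr rfl fun p hp => ?_
            conv_lhs => rw [hcoe p hp]
            rw [TensorProduct.sum_tmul]
            exact Finset.sum_congr rfl fun i _ => (TensorProduct.smul_tmul' _ _ _)
        _ = ∑ i, ∑ p ∈ s, (b₁.coord i) (p₁ p.1) • ((b₁ i : H) ⊗ₜ[k] p.2) := Finset.sum_comm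
        _ = ∑ i, (b₁ i : H) ⊗ₜ[k] (ctr1 ((b₁.coord i) ∘ₗ p₁) t) := by
            refine Finset.sum_congr rfl fun i _ => ?_
            rw [hs]
            simp only [map_sum, ctr1_tmul, LinearMap.comp_apply]
            rw [TensorProduct.tmul_sum]
            exact Finset.sum_congr rfl fun p _ => by rw [TensorProduct.tmul_smul]
    refine ⟨∑ i, (b₁ i : H) ⊗ₜ[k] (⟨_, h1 ((b₁.coord i) ∘ₗ p₁)⟩ : ↥Y), ?_⟩
    rw [map_sum]
    simp only [LinearMap.lTensor_tmul, Submodule.coe_subtype]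
    exact key1.symm
  -- step 3 : combine
  obtain ⟨u, hu⟩ := m2
  obtain ⟨v, hv⟩ := m1
  obtain ⟨qY, hqY⟩ := Submodule.exists_isCompl Y
  set pY := Y.projectionOnto qY hqY with hpY
  refine ⟨LinearMap.lTensor (↥Y) pY u, ?_⟩
  have e1 : (TensorProduct.map Y.subtype Y.subtype) ∘ₗ (LinearMap.lTensor (↥Y) pY)
      = (LinearMap.lTensor H (Y.subtype ∘ₗ pY)) ∘ₗ (LinearMap.rTensor H Y.subtype) := by
    apply TensorProduct.ext'
    intro a b
    simp
  have e2 : (Y.subtype ∘ₗ pY) ∘ₗ Y.subtype = Y.subtype := by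
    ext w
    simp [hpY, Submodule.projectionOnto_apply_left hqY]
  calc (TensorProduct.map Y.subtype Y.subtype) ((LinearMap.lTensor (↥Y) pY) u)
      = (LinearMap.lTensor H (Y.subtype ∘ₗ pY)) ((LinearMap.rTensor H Y.subtype) u) :=
        LinearMap.congr_fun e1 u
    _ = (LinearMap.lTensor H (Y.subtype ∘ₗ pY)) ((LinearMap.lTensor H Y.subtype) v) := by
        rw [hu, ← hv]
    _ = (LinearMap.lTensor H ((Y.subtype ∘ₗ pY) ∘ₗ Y.subtype)) v := by
        simp [LinearMap.lTensor_comp]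
    _ = t := by rw [e2, hv]

end Coalg2
section Coalg3
variable {k : Type*} [Field k] {H : Type*} [AddCommGroup H] [Module k H] [Coalgebra k H]

lemma ctr2_counit_comul (b : H) : ctr2 (Coalgebra.counit (R := k)) (Coalgebra.comul (R := k) b) = b := by
  rw [ctr2, LinearMap.comp_apply, Coalgebra.lTensor_counit_comul]
  simp

lemma ctr1_counit_comul (b : H) : ctr1 (Coalgebra.counit (R := k)) (Coalgebra.comul (R := k) b) = b := by
  rw [ctr1, LinearMap.comp_apply, Coalgebra.rTensor_counit_comul]
  simp

lemma exists_finSubcoalgebra (h : H) : ∃ C : Submodule k H, FiniteDimensional k ↥C ∧ h ∈ C ∧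
    ∀ c ∈ C, Coalgebra.comul (R := k) c ∈
      LinearMap.range (TensorProduct.map C.subtype C.subtype) := by
  classical
  set gen : ((H →ₗ[k] k) × (H →ₗ[k] k)) → H := fun p => PsiM p.1 p.2 (D2 h) with hgen
  refine ⟨Submodule.span k (Set.range gen), ?_, ?_, ?_⟩
  · -- finite-dimensionality
    set S : Set H := ⋃ i ∈ (↑(ℛ k h).index : Set (ℛ k h).ι),
      ((ℛ k ((ℛ k h).right i)).left '' ↑(ℛ k ((ℛ k h).right i)).index) with hS
    have hSfin : S.Finite := Set.Finite.biUnion ((ℛ k h).index.finite_toSet)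
      (fun i _ => Set.Finite.image _ ((ℛ k ((ℛ k h).right i)).index.finite_toSet))
    haveI : FiniteDimensional k ↥(Submodule.span k S) :=
      FiniteDimensional.span_of_finite k hSfin
    apply Submodule.finiteDimensional_of_le (S₂ := Submodule.span k S)
    rw [Submodule.span_le]
    rintro _ ⟨⟨f, g⟩, rfl⟩
    rw [hgen]
    simp only
    rw [Psi_D2]
    apply Submodule.sum_mem
    intro i hi
    apply Submodule.smul_mem
    rw [← (ℛ k ((ℛ k h).right i)).eq]
    rw [map_sum]
    apply Submodule.sum_mem
    intro j hj
    rw [ctr2_tmul]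
    apply Submodule.smul_mem
    apply Submodule.subset_span
    exact Set.mem_biUnion hi ⟨j, hj, rfl⟩
  · -- h is in the span
    have hh : gen (Coalgebra.counit (R := k), Coalgebra.counit (R := k)) = h := by
      rw [hgen]
      simp only
      rw [Psi_D2]
      have e1 : ∀ i ∈ (ℛ k h).index,
          Coalgebra.counit (R := k) ((ℛ k h).left i) •
            ctr2 (Coalgebra.counit (R := k)) (Coalgebra.comul (R := k) ((ℛ k h).right i))
          = Coalgebra.counit (R := k) ((ℛ k h).left i) • (ℛ k h).right i :=
        fun i _ => by rw [ctr2_counit_comul]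
      rw [Finset.sum_congr rfl e1]
      have e2 : ∑ i ∈ (ℛ k h).index, Coalgebra.counit (R := k) ((ℛ k h).left i) • (ℛ k h).right i
          = ctr1 (Coalgebra.counit (R := k)) (Coalgebra.comul (R := k) h) := by
        rw [← (ℛ k h).eq]; simp [map_sum]
      rw [e2, ctr1_counit_comul]
    exact hh ▸ Submodule.subset_span ⟨_, rfl⟩
  · -- closure of comultiplication
    intro c hc
    induction hc using Submodule.span_induction with
    | zero => simp only [map_zero]; exact Submodule.zero_mem _
    | add a b ha hb iha ihb => rw [map_add]; exact Submodule.add_mem _ iha ihb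
    | smul a x hx ihx => rw [map_smul]; exact Submodule.smul_mem _ a ihx
    | mem y hy =>
      obtain ⟨⟨f, g⟩, rfl⟩ := hy
      apply mem_range_map
      · intro l
        have key : ctr2 l (Coalgebra.comul (R := k) (gen (f, g))) = gen (f, dmul l g) := by
          rw [hgen]
          simp only
          rw [Psi_D2, Psi_D2]
          rw [map_sum, map_sum]
          refine Finset.sum_congr rfl fun i _ => ?_
          rw [map_smul, map_smul, M1]
        rw [key]
        exact Submodule.subset_span ⟨_, rfl⟩
      · intro l
        have key : ctr1 l (Coalgebra.comul (R := k) (gen (f, g))) = gen (dmul f l, g) := by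
          rw [hgen]
          simp only
          rw [Psi_D2', Psi_D2']
          rw [map_sum, map_sum]
          refine Finset.sum_congr rfl fun i _ => ?_
          rw [map_smul, map_smul, M2]
        rw [key]
        exact Submodule.subset_span ⟨_, rfl⟩

end Coalg3
section Rho
variable {k H M : Type*} [Field k] [Ring H] [Algebra k H]
  [AddCommGroup M] [Module k M] [Module H M] [IsScalarTower k H M]

lemma hsmul_comm (g : H) (a : k) (m : M) : g • (a • m) = a • (g • m) := by
  rw [← algebraMap_smul (R := k) (A := H) (M := M) a m, ← mul_smul, ← Algebra.commutes a g,
    mul_smul, algebraMap_smul]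

/-- the representation of `H` on a stable submodule `W` -/
noncomputable def rho (W : Submodule k M) (hW : ∀ (g : H), ∀ x ∈ W, g • x ∈ W) :
    H →ₗ[k] Module.End k ↥W where
  toFun g :=
    { toFun := fun w => ⟨g • (w : M), hW g _ w.2⟩
      map_add' := fun w w' => Subtype.ext (by simp [smul_add])
      map_smul' := fun a w => Subtype.ext (by simp [hsmul_comm]) }
  map_add' g g' := LinearMap.ext fun w => Subtype.ext (by simp [add_smul])
  map_smul' a g := LinearMap.ext fun w => Subtype.ext (by simp [smul_assoc])

@[simp] lemma rho_apply_coe (W : Submodule k M) (hW : ∀ (g : H), ∀ x ∈ W, g • x ∈ W)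
    (g : H) (w : ↥W) : ((rho W hW g w : ↥W) : M) = g • (w : M) := rfl

lemma rho_mul (W : Submodule k M) (hW : ∀ (g : H), ∀ x ∈ W, g • x ∈ W) (g g' : H) :
    rho W hW (g * g') = rho W hW g * rho W hW g' :=
  LinearMap.ext fun w => Subtype.ext (by
    simp only [rho_apply_coe, Module.End.mul_apply, mul_smul, rho_apply_coe])

lemma rho_algebraMap (W : Submodule k M) (hW : ∀ (g : H), ∀ x ∈ W, g • x ∈ W) (a : k) :
    rho W hW (algebraMap k H a) = algebraMap k (Module.End k ↥W) a :=
  LinearMap.ext fun w => Subtype.ext (by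
    simp only [rho_apply_coe, Module.algebraMap_end_apply, algebraMap_smul,
      SetLike.val_smul])

end Rho
set_option maxHeartbeats 1000000 in
set_option synthInstance.maxHeartbeats 200000 in
/-- An element of a finite-dimensional subalgebra (of a finite-dimensional algebra) that is
convolution-invertible has its convolution inverse in the subalgebra; consequently, since
`ρ ∘ antipode` takes values in `X` and its convolution inverse is `ρ`, so does `ρ`. -/
lemma conv_inverse_mem {k H : Type*} [Field k] [Ring H] [HopfAlgebra k H]
    {A : Type*} [Ring A] [Algebra k A] [FiniteDimensional k A]
    (ρ : H →ₗ[k] A)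
    (hmul : ∀ g g' : H, ρ (g * g') = ρ g * ρ g')
    (halg : ∀ a : k, ρ (algebraMap k H a) = algebraMap k A a)
    (X : Submodule k A) (X_one : (1 : A) ∈ X)
    (X_mul : ∀ T T' : A, T ∈ X → T' ∈ X → T * T' ∈ X)
    (hu : ∀ g : H, ρ (HopfAlgebra.antipode (R := k) g) ∈ X)
    (h : H) : ρ h ∈ X := by
  classical
  have X_alg : ∀ a : k, algebraMap k A a ∈ X := fun a => by
    rw [Algebra.algebraMap_eq_smul_one]
    exact X.smul_mem a X_one
  -- a finite-dimensional subcoalgebra containing h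
  obtain ⟨C, hCfd, hhC, hC⟩ := exists_finSubcoalgebra (k := k) h
  haveI := hCfd
  obtain ⟨Cc, hCc⟩ := Submodule.exists_isCompl C
  set prC := C.projectionOnto Cc hCc with hprC
  have projsub : prC ∘ₗ C.subtype = LinearMap.id := by
    ext w
    simp [hprC, Submodule.projectionOnto_apply_left hCc]
  have projproj : (TensorProduct.map prC prC) ∘ₗ (TensorProduct.map C.subtype C.subtype)
      = LinearMap.id := by
    rw [← TensorProduct.map_comp, projsub, TensorProduct.map_id]
  set ΔC : ↥C →ₗ[k] ↥C ⊗[k] ↥C :=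
    (TensorProduct.map prC prC) ∘ₗ (Coalgebra.comul (R := k)) ∘ₗ C.subtype with hΔC
  have ΔC_spec : ∀ c : ↥C,
      (TensorProduct.map C.subtype C.subtype) (ΔC c) = Coalgebra.comul (R := k) (c : H) := by
    intro c
    obtain ⟨z, hz⟩ := hC ↑c c.2
    have h1 : ΔC c = z := by
      rw [hΔC, LinearMap.comp_apply, LinearMap.comp_apply, Submodule.coe_subtype, ← hz,
        ← LinearMap.comp_apply (TensorProduct.map prC prC), projproj, LinearMap.id_apply]
    rw [h1, hz]
  -- convolution product on Hom(C, A)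
  set conv : (↥C →ₗ[k] A) → (↥C →ₗ[k] A) → (↥C →ₗ[k] A) := fun f g =>
    (LinearMap.mul' k A) ∘ₗ (TensorProduct.map f g) ∘ₗ ΔC with hconv
  have conv_repr : ∀ (f g : ↥C →ₗ[k] A) (c : ↥C) (s : Finset (↥C × ↥C)),
      ΔC c = ∑ p ∈ s, p.1 ⊗ₜ[k] p.2 → conv f g c = ∑ p ∈ s, f p.1 * g p.2 := by
    intro f g c s hs
    rw [hconv]
    simp only [LinearMap.comp_apply, hs, map_sum, TensorProduct.map_tmul, LinearMap.mul'_apply]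
  -- counit laws transported to C
  have counitC1 : ∀ (c : ↥C) (s : Finset (↥C × ↥C)),
      ΔC c = ∑ p ∈ s, p.1 ⊗ₜ[k] p.2 →
      ∑ p ∈ s, Coalgebra.counit (R := k) ((p.1 : H)) • p.2 = c := by
    intro c s hs
    apply Submodule.injective_subtype C
    have hh := congrArg (ctr1 (Coalgebra.counit (R := k)))
      (congrArg (TensorProduct.map C.subtype C.subtype) hs)
    rw [ΔC_spec, ctr1_counit_comul] at hh
    simp only [map_sum, TensorProduct.map_tmul, ctr1_tmul, Submodule.coe_subtype] at hh
    simp only [Submodule.coe_subtype, Submodule.coe_sum, SetLike.val_smul]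
    exact hh.symm
  have counitC2 : ∀ (c : ↥C) (s : Finset (↥C × ↥C)),
      ΔC c = ∑ p ∈ s, p.1 ⊗ₜ[k] p.2 →
      ∑ p ∈ s, Coalgebra.counit (R := k) ((p.2 : H)) • p.1 = c := by
    intro c s hs
    apply Submodule.injective_subtype C
    have hh := congrArg (ctr2 (Coalgebra.counit (R := k)))
      (congrArg (TensorProduct.map C.subtype C.subtype) hs)
    rw [ΔC_spec, ctr2_counit_comul] at hh
    simp only [map_sum, TensorProduct.map_tmul, ctr2_tmul, Submodule.coe_subtype] at hh
    simp only [Submodule.coe_subtype, Submodule.coe_sum, SetLike.val_smul]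
    exact hh.symm
  -- the unit of the convolution algebra
  set e₀ : ↥C →ₗ[k] A :=
    (Algebra.linearMap k A) ∘ₗ ((Coalgebra.counit (R := k)) ∘ₗ C.subtype) with he₀
  have e₀_apply : ∀ c : ↥C, e₀ c = algebraMap k A (Coalgebra.counit (R := k) (c : H)) := by
    intro c; rw [he₀]; rfl
  have unit_l : ∀ f : ↥C →ₗ[k] A, conv e₀ f = f := by
    intro f
    apply LinearMap.ext
    intro c
    obtain ⟨s, hs⟩ := TensorProduct.exists_finset (R := k) (ΔC c)
    rw [conv_repr e₀ f c s hs]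
    calc ∑ p ∈ s, e₀ p.1 * f p.2
        = ∑ p ∈ s, Coalgebra.counit (R := k) ((p.1 : H)) • f p.2 := by
          refine Finset.sum_congr rfl fun p _ => ?_
          rw [e₀_apply, ← Algebra.smul_def]
      _ = f (∑ p ∈ s, Coalgebra.counit (R := k) ((p.1 : H)) • p.2) := by
          rw [map_sum]
          exact Finset.sum_congr rfl fun p _ => (map_smul f _ _).symm
      _ = f c := by rw [counitC1 c s hs]
  have unit_r : ∀ f : ↥C →ₗ[k] A, conv f e₀ = f := by
    intro f
    apply LinearMap.ext
    intro c
    obtain ⟨s, hs⟩ := TensorProduct.exists_finset (R := k) (ΔC c)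
    rw [conv_repr f e₀ c s hs]
    calc ∑ p ∈ s, f p.1 * e₀ p.2
        = ∑ p ∈ s, Coalgebra.counit (R := k) ((p.2 : H)) • f p.1 := by
          refine Finset.sum_congr rfl fun p _ => ?_
          rw [e₀_apply, ← Algebra.commutes, ← Algebra.smul_def]
      _ = f (∑ p ∈ s, Coalgebra.counit (R := k) ((p.2 : H)) • p.1) := by
          rw [map_sum]
          exact Finset.sum_congr rfl fun p _ => (map_smul f _ _).symm
      _ = f c := by rw [counitC2 c s hs]
  -- the two distinguished elements
  set rr : ↥C →ₗ[k] A := ρ ∘ₗ C.subtype with hrr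
  set uu : ↥C →ₗ[k] A := ρ ∘ₗ (HopfAlgebra.antipode (R := k)) ∘ₗ C.subtype with huu
  -- inverse laws
  have inv_l : conv uu rr = e₀ := by
    apply LinearMap.ext
    intro c
    obtain ⟨s, hs⟩ := TensorProduct.exists_finset (R := k) (ΔC c)
    rw [conv_repr uu rr c s hs]
    have eH : ∑ p ∈ s, (HopfAlgebra.antipode (R := k) ((p.1 : H))) * ((p.2 : H))
        = algebraMap k H (Coalgebra.counit (R := k) (c : H)) := by
      have hcm : Coalgebra.comul (R := k) ((c : H)) = ∑ p ∈ s, ((p.1 : H)) ⊗ₜ[k] ((p.2 : H)) := by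
        rw [← ΔC_spec, hs, map_sum]
        exact Finset.sum_congr rfl fun p _ => by
          rw [TensorProduct.map_tmul, Submodule.coe_subtype]
      have := HopfAlgebra.mul_antipode_rTensor_comul_apply (R := k) ((c : H))
      rw [hcm] at this
      simpa [map_sum] using this
    calc ∑ p ∈ s, uu p.1 * rr p.2
        = ρ (∑ p ∈ s, (HopfAlgebra.antipode (R := k) ((p.1 : H))) * ((p.2 : H))) := by
          rw [map_sum]
          refine Finset.sum_congr rfl fun p _ => ?_
          rw [hmul]
          rfl
      _ = e₀ c := by
          rw [eH, halg, e₀_apply]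
  have inv_r : conv rr uu = e₀ := by
    apply LinearMap.ext
    intro c
    obtain ⟨s, hs⟩ := TensorProduct.exists_finset (R := k) (ΔC c)
    rw [conv_repr rr uu c s hs]
    have eH : ∑ p ∈ s, ((p.1 : H)) * (HopfAlgebra.antipode (R := k) ((p.2 : H)))
        = algebraMap k H (Coalgebra.counit (R := k) (c : H)) := by
      have hcm : Coalgebra.comul (R := k) ((c : H)) = ∑ p ∈ s, ((p.1 : H)) ⊗ₜ[k] ((p.2 : H)) := by
        rw [← ΔC_spec, hs, map_sum]
        exact Finset.sum_congr rfl fun p _ => by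
          rw [TensorProduct.map_tmul, Submodule.coe_subtype]
      have := HopfAlgebra.mul_antipode_lTensor_comul_apply (R := k) ((c : H))
      rw [hcm] at this
      simpa [map_sum] using this
    calc ∑ p ∈ s, rr p.1 * uu p.2
        = ρ (∑ p ∈ s, ((p.1 : H)) * (HopfAlgebra.antipode (R := k) ((p.2 : H)))) := by
          rw [map_sum]
          refine Finset.sum_congr rfl fun p _ => ?_
          rw [hmul]
          rfl
      _ = e₀ c := by
          rw [eH, halg, e₀_apply]
  -- injectivity of the triple inclusion, for associativity
  have J3inj : Function.Injective
      (TensorProduct.map C.subtype (TensorProduct.map C.subtype C.subtype)) := by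
    have h3 : (TensorProduct.map prC (TensorProduct.map prC prC)) ∘ₗ
        (TensorProduct.map C.subtype (TensorProduct.map C.subtype C.subtype))
        = LinearMap.id := by
      rw [← TensorProduct.map_comp, projsub, projproj, TensorProduct.map_id]
    intro a b hab
    have h4 := congrArg (TensorProduct.map prC (TensorProduct.map prC prC)) hab
    rw [← LinearMap.comp_apply, ← LinearMap.comp_apply, h3] at h4
    simpa using h4
  -- comul of coerced elements
  have hcm : ∀ (c : ↥C) (s : Finset (↥C × ↥C)), ΔC c = ∑ p ∈ s, p.1 ⊗ₜ[k] p.2 →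
      Coalgebra.comul (R := k) ((c : H)) = ∑ p ∈ s, ((p.1 : H)) ⊗ₜ[k] ((p.2 : H)) := by
    intro c s hs
    rw [← ΔC_spec, hs, map_sum]
    exact Finset.sum_congr rfl fun p _ => by
      rw [TensorProduct.map_tmul, Submodule.coe_subtype]
  -- associativity of convolution
  have assoc_conv : ∀ f g e : ↥C →ₗ[k] A, conv (conv f g) e = conv f (conv g e) := by
    intro f g e
    apply LinearMap.ext
    intro c
    obtain ⟨s, hs⟩ := TensorProduct.exists_finset (R := k) (ΔC c)
    choose s1 hs1 using fun p : ↥C × ↥C => TensorProduct.exists_finset (R := k) (ΔC p.1)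
    choose s2 hs2 using fun p : ↥C × ↥C => TensorProduct.exists_finset (R := k) (ΔC p.2)
    have TI : ∑ p ∈ s, ∑ q ∈ s1 p, (q.1 ⊗ₜ[k] (q.2 ⊗ₜ[k] p.2))
        = ∑ p ∈ s, ∑ q ∈ s2 p, (p.1 ⊗ₜ[k] (q.1 ⊗ₜ[k] q.2)) := by
      apply J3inj
      rw [map_sum, map_sum]
      have eL : ∑ p ∈ s, (TensorProduct.map C.subtype (TensorProduct.map C.subtype C.subtype))
            (∑ q ∈ s1 p, (q.1 ⊗ₜ[k] (q.2 ⊗ₜ[k] p.2)))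
          = (TensorProduct.assoc k H H H) ((LinearMap.rTensor H (Coalgebra.comul (R := k)))
              (Coalgebra.comul (R := k) ((c : H)))) := by
        rw [hcm c s hs, map_sum, map_sum]
        refine Finset.sum_congr rfl fun p _ => ?_
        rw [LinearMap.rTensor_tmul, hcm p.1 _ (hs1 p), TensorProduct.sum_tmul, map_sum, map_sum]
        exact Finset.sum_congr rfl fun q _ => by simp
      have eR : ∑ p ∈ s, (TensorProduct.map C.subtype (TensorProduct.map C.subtype C.subtype))
            (∑ q ∈ s2 p, (p.1 ⊗ₜ[k] (q.1 ⊗ₜ[k] q.2)))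
          = (LinearMap.lTensor H (Coalgebra.comul (R := k)))
              (Coalgebra.comul (R := k) ((c : H))) := by
        rw [hcm c s hs, map_sum]
        refine Finset.sum_congr rfl fun p _ => ?_
        rw [LinearMap.lTensor_tmul, hcm p.2 _ (hs2 p), TensorProduct.tmul_sum, map_sum]
        exact Finset.sum_congr rfl fun q _ => by simp
      rw [eL, eR, Coalgebra.coassoc_apply]
    -- apply the multiplication map to TI
    have happ := congrArg
      ((LinearMap.mul' k A) ∘ₗ TensorProduct.map f ((LinearMap.mul' k A) ∘ₗ TensorProduct.map g e)) TI
    simp only [map_sum, LinearMap.comp_apply, TensorProduct.map_tmul, LinearMap.mul'_apply] at happ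
    -- identify the two sides
    rw [conv_repr (conv f g) e c s hs, conv_repr f (conv g e) c s hs]
    calc ∑ p ∈ s, conv f g p.1 * e p.2
        = ∑ p ∈ s, ∑ q ∈ s1 p, f q.1 * (g q.2 * e p.2) := by
          refine Finset.sum_congr rfl fun p _ => ?_
          rw [conv_repr f g p.1 (s1 p) (hs1 p), Finset.sum_mul]
          exact Finset.sum_congr rfl fun q _ => mul_assoc _ _ _
      _ = ∑ p ∈ s, ∑ q ∈ s2 p, f p.1 * (g q.1 * e q.2) := happ
      _ = ∑ p ∈ s, f p.1 * conv g e p.2 := by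
          refine Finset.sum_congr rfl fun p _ => ?_
          rw [conv_repr g e p.2 (s2 p) (hs2 p), Finset.mul_sum]
  -- values in X
  have uu_val : ∀ c : ↥C, uu c ∈ X := fun c => hu ((c : H))
  have e₀_val : ∀ c : ↥C, e₀ c ∈ X := fun c => by rw [e₀_apply]; exact X_alg _
  have conv_val : ∀ f g : ↥C →ₗ[k] A, (∀ c, f c ∈ X) → (∀ c, g c ∈ X) →
      ∀ c, conv f g c ∈ X := by
    intro f g hf hg c
    obtain ⟨s, hs⟩ := TensorProduct.exists_finset (R := k) (ΔC c)
    rw [conv_repr f g c s hs]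
    exact Submodule.sum_mem X fun p _ => X_mul _ _ (hf p.1) (hg p.2)
  -- the subspace of Hom(C, A) of maps with values in X
  set R' : Submodule k (↥C →ₗ[k] A) :=
    { carrier := {f | ∀ c, f c ∈ X}
      add_mem' := fun {f} {g} hf hg c => by
        rw [LinearMap.add_apply]; exact X.add_mem (hf c) (hg c)
      zero_mem' := fun c => by rw [LinearMap.zero_apply]; exact X.zero_mem
      smul_mem' := fun a {f} hf c => by
        rw [LinearMap.smul_apply]; exact X.smul_mem a (hf c) } with hR'
  have memR' : ∀ f : ↥C →ₗ[k] A, f ∈ R' ↔ ∀ c, f c ∈ X := fun f => Iff.rfl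
  -- linearity of convolution in the second argument
  have conv_add : ∀ (f g g' : ↥C →ₗ[k] A), conv f (g + g') = conv f g + conv f g' := by
    intro f g g'
    apply LinearMap.ext; intro c
    obtain ⟨s, hs⟩ := TensorProduct.exists_finset (R := k) (ΔC c)
    rw [LinearMap.add_apply, conv_repr f (g + g') c s hs, conv_repr f g c s hs,
      conv_repr f g' c s hs, ← Finset.sum_add_distrib]
    exact Finset.sum_congr rfl fun p _ => by rw [LinearMap.add_apply, mul_add]
  have conv_smul : ∀ (f : ↥C →ₗ[k] A) (a : k) (g : ↥C →ₗ[k] A),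
      conv f (a • g) = a • conv f g := by
    intro f a g
    apply LinearMap.ext; intro c
    obtain ⟨s, hs⟩ := TensorProduct.exists_finset (R := k) (ΔC c)
    rw [LinearMap.smul_apply, conv_repr f (a • g) c s hs, conv_repr f g c s hs,
      Finset.smul_sum]
    exact Finset.sum_congr rfl fun p _ => by rw [LinearMap.smul_apply, mul_smul_comm]
  haveI : FiniteDimensional k (↥C →ₗ[k] A) := by infer_instance
  set L : ↥R' →ₗ[k] ↥R' :=
    { toFun := fun g => ⟨conv uu ↑g, conv_val uu ↑g uu_val g.2⟩
      map_add' := fun g g' => Subtype.ext (by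
        simp only [Submodule.coe_add]
        exact conv_add uu ↑g ↑g')
      map_smul' := fun a g => Subtype.ext (by
        simp only [SetLike.val_smul, RingHom.id_apply]
        exact conv_smul uu a ↑g) } with hL
  have Linj : Function.Injective L := by
    intro g g' hgg
    have h1 : conv uu ↑g = conv uu ↑g' := congrArg Subtype.val hgg
    apply Subtype.ext
    calc (g : ↥C →ₗ[k] A) = conv e₀ ↑g := (unit_l _).symm
      _ = conv (conv rr uu) ↑g := by rw [inv_r]
      _ = conv rr (conv uu ↑g) := assoc_conv _ _ _
      _ = conv rr (conv uu ↑g') := by rw [h1]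
      _ = conv (conv rr uu) ↑g' := (assoc_conv _ _ _).symm
      _ = conv e₀ ↑g' := by rw [inv_r]
      _ = ↑g' := unit_l _
  haveI : FiniteDimensional k ↥R' := inferInstance
  have Lsurj : Function.Surjective L :=
    (LinearMap.injective_iff_surjective (K := k) (V := ↥R') (f := L)).mp Linj
  obtain ⟨g0, hg0⟩ := Lsurj ⟨e₀, e₀_val⟩
  have he : conv uu ↑g0 = e₀ := congrArg Subtype.val hg0
  have hrg : rr = (g0 : ↥C →ₗ[k] A) := by
    calc rr = conv rr e₀ := (unit_r _).symm
      _ = conv rr (conv uu ↑g0) := by rw [he]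
      _ = conv (conv rr uu) ↑g0 := (assoc_conv _ _ _).symm
      _ = conv e₀ ↑g0 := by rw [inv_r]
      _ = ↑g0 := unit_l _
  have hXh : ρ h ∈ X := by
    have h5 := g0.2 (⟨h, hhC⟩ : ↥C)
    rw [← hrg] at h5
    exact h5
  exact hXh

set_option maxHeartbeats 1000000 in
set_option synthInstance.maxHeartbeats 200000 in
/-- If the antipode of a Hopf algebra `H` over a field `k` is injective, then every
`S(H)`-submodule of a locally finite left `H`-module is an `H`-submodule. -/
theorem sH_submodule_is_H_submodule
    {k H M : Type*} [Field k] [Ring H] [HopfAlgebra k H]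
    [AddCommGroup M] [Module k M] [Module H M] [IsScalarTower k H M]
    (hS : Function.Injective (HopfAlgebra.antipode (R := k) (A := H)))
    (hlf : ∀ m : M, ∃ W : Submodule k M, FiniteDimensional k W ∧ m ∈ W ∧
      ∀ (h : H), ∀ x ∈ W, h • x ∈ W)
    (N : Submodule k M)
    (hN : ∀ (h : H), ∀ x ∈ N, HopfAlgebra.antipode (R := k) h • x ∈ N) :
    ∀ (h : H), ∀ x ∈ N, h • x ∈ N := by
  classical
  intro h x hx
  obtain ⟨W, hWfd, hxW, hWstab⟩ := hlf x
  haveI := hWfd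
  set X : Submodule k (Module.End k ↥W) :=
    { carrier := {T | ∀ w : ↥W, (w : M) ∈ N → ((T w : ↥W) : M) ∈ N}
      add_mem' := fun {T} {T'} hT hT' w hw => by
        rw [LinearMap.add_apply]
        exact N.add_mem (hT w hw) (hT' w hw)
      zero_mem' := fun w hw => by
        rw [LinearMap.zero_apply]
        exact N.zero_mem
      smul_mem' := fun a {T} hT w hw => by
        rw [LinearMap.smul_apply, SetLike.val_smul]
        exact N.smul_mem a (hT w hw) } with hXdef
  have X_one : (1 : Module.End k ↥W) ∈ X := fun w hw => hw
  have X_mul : ∀ T T' : Module.End k ↥W, T ∈ X → T' ∈ X → T * T' ∈ X :=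
    fun T T' hT hT' w hw => hT _ (hT' w hw)
  have hu : ∀ g : H, (rho W hWstab) (HopfAlgebra.antipode (R := k) g) ∈ X :=
    fun g w hw => hN _ _ hw
  have hXh : (rho W hWstab) h ∈ X :=
    conv_inverse_mem (rho W hWstab) (rho_mul W hWstab) (rho_algebraMap W hWstab)
      X X_one X_mul hu h
  exact hXh ⟨x, hxW⟩ hx
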